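/- Let A = (a_{i,j}) be an n × n matrix in which no value appears in more than k entries. Fix a pair (I,J) with I = {i,i'} ⊆ [n], i < i', J = {j,j'} ⊆ [n], j ≠ j', and a_{i,j} = a_{i',j'}. Then the number of pairs (I_1, J_1) ≠ (I,J), with I_1 = {i_1,i_1'} ⊆ [n], i_1 < i_1', J_1 = {j_1,j_1'} ⊆ [n], j_1 ≠ j_1', a_{i_1,j_1} = a_{i_1',j_1'}, and such that I ∩ I_1 ≠ ∅ or J ∩ J_1 ≠ ∅, is at most 4nk − 1. -/
import Mathlib


open Finset

/-- Let `A` be an `n × n` matrix in which no value appears in more than `k` entries.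
Fix `(I, J)` with `I = {i, i'}`, `i < i'`, `J = {j, j'}`, `j ≠ j'` and
`A i j = A i' j'`. Then the number of tuples `(I₁, J₁) ≠ (I, J)` (encoded as quadruples
`(i₁, i₁', j₁, j₁')` with `i₁ < i₁'`, `j₁ ≠ j₁'`, `A i₁ j₁ = A i₁' j₁'`) such that
`I ∩ I₁ ≠ ∅` or `J ∩ J₁ ≠ ∅` is at most `4 * n * k - 1`. -/

theorem latin_transversal_degree_bound {α : Type*} [DecidableEq α] (n k : ℕ)
    (A : Fin n → Fin n → α)
    (hA : ∀ v : α,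
      ((Finset.univ ×ˢ Finset.univ).filter fun p : Fin n × Fin n => A p.1 p.2 = v).card
        ≤ k)
    (i i' j j' : Fin n) (hii : i < i') (hjj : j ≠ j') (ha : A i j = A i' j') :
    (Finset.univ.filter fun q : Fin n × Fin n × Fin n × Fin n =>
        q.1 < q.2.1 ∧ q.2.2.1 ≠ q.2.2.2 ∧ A q.1 q.2.2.1 = A q.2.1 q.2.2.2 ∧
        q ≠ (i, i', j, j') ∧
        ((({q.1, q.2.1} : Finset (Fin n)) ∩ {i, i'}).Nonempty ∨
          (({q.2.2.1, q.2.2.2} : Finset (Fin n)) ∩ {j, j'}).Nonempty)).card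
      ≤ 4 * n * k - 1 := by
  classical
  set onL : Fin n × Fin n → Prop := fun c => c.1 = i ∨ c.1 = i' ∨ c.2 = j ∨ c.2 = j' with honL
  have donL : DecidablePred onL := fun c => by unfold onL; infer_instance
  set L : Finset (Fin n × Fin n) := univ.filter onL with hLdef
  set f : Fin n × Fin n × Fin n × Fin n → (Fin n × Fin n) × (Fin n × Fin n) :=
    fun q => if onL (q.1, q.2.2.1) then ((q.1, q.2.2.1), (q.2.1, q.2.2.2))
      else ((q.2.1, q.2.2.2), (q.1, q.2.2.1)) with hf
  set g : (Fin n × Fin n) × (Fin n × Fin n) → Fin n × Fin n × Fin n × Fin n :=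
    fun p => if p.1.1 < p.2.1 then (p.1.1, p.2.1, p.1.2, p.2.2)
      else (p.2.1, p.1.1, p.2.2, p.1.2) with hg
  have hgf : ∀ q : Fin n × Fin n × Fin n × Fin n, q.1 < q.2.1 → g (f q) = q := by
    intro q hq
    by_cases h : onL (q.1, q.2.2.1)
    · simp only [hf, hg, if_pos h, if_pos hq]
    · simp only [hf, hg, if_neg h, if_neg (asymm hq), not_lt_of_gt hq]
  set T : Finset ((Fin n × Fin n) × (Fin n × Fin n)) :=
    univ.filter (fun p => p.1 ∈ L ∧ A p.2.1 p.2.2 = A p.1.1 p.1.2) with hTdef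
  set q₀ : Fin n × Fin n × Fin n × Fin n := (i, i', j, j') with hq₀
  -- membership
  have hmem : ∀ q ∈ (Finset.univ.filter fun q : Fin n × Fin n × Fin n × Fin n =>
        q.1 < q.2.1 ∧ q.2.2.1 ≠ q.2.2.2 ∧ A q.1 q.2.2.1 = A q.2.1 q.2.2.2 ∧
        q ≠ (i, i', j, j') ∧
        ((({q.1, q.2.1} : Finset (Fin n)) ∩ {i, i'}).Nonempty ∨
          (({q.2.2.1, q.2.2.2} : Finset (Fin n)) ∩ {j, j'}).Nonempty)),
      f q ∈ T.erase (f q₀) := by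
    intro q hq
    simp only [mem_filter, mem_univ, true_and] at hq
    obtain ⟨h1, h2, h3, h4, h5⟩ := hq
    have hlines : onL (q.1, q.2.2.1) ∨ onL (q.2.1, q.2.2.2) := by
      unfold onL
      rcases h5 with h | h
      · obtain ⟨x, hx⟩ := h
        simp only [mem_inter, mem_insert, mem_singleton] at hx
        rcases hx with ⟨hx1 | hx1, hx2 | hx2⟩ <;> subst hx1 <;> simp [hx2]
      · obtain ⟨x, hx⟩ := h
        simp only [mem_inter, mem_insert, mem_singleton] at hx
        rcases hx with ⟨hx1 | hx1, hx2 | hx2⟩ <;> subst hx1 <;> simp [hx2]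
    have hfT : f q ∈ T := by
      by_cases h : onL (q.1, q.2.2.1)
      · simp only [hf, if_pos h, hTdef, mem_filter, mem_univ, true_and, hLdef]
        exact ⟨by simpa using h, h3.symm⟩
      · have h' : onL (q.2.1, q.2.2.2) := hlines.resolve_left h
        simp only [hf, if_neg h, hTdef, mem_filter, mem_univ, true_and, hLdef]
        exact ⟨by simpa using h', h3⟩
    refine mem_erase.mpr ⟨?_, hfT⟩
    intro heq
    apply h4
    have := hgf q h1
    have h0 : g (f q₀) = q₀ := hgf q₀ (by simpa [hq₀] using hii)
    rw [heq, h0] at this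
    exact this.symm
  have hinj : Set.InjOn f ((Finset.univ.filter fun q : Fin n × Fin n × Fin n × Fin n =>
        q.1 < q.2.1 ∧ q.2.2.1 ≠ q.2.2.2 ∧ A q.1 q.2.2.1 = A q.2.1 q.2.2.2 ∧
        q ≠ (i, i', j, j') ∧
        ((({q.1, q.2.1} : Finset (Fin n)) ∩ {i, i'}).Nonempty ∨
          (({q.2.2.1, q.2.2.2} : Finset (Fin n)) ∩ {j, j'}).Nonempty)) : Finset _) := by
    intro a ha' b hb' hab
    simp only [Finset.coe_filter, Set.mem_setOf_eq, mem_univ, true_and] at ha' hb'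
    have := hgf a ha'.1
    rw [hab, hgf b hb'.1] at this
    exact this.symm
  have hcard1 := Finset.card_le_card_of_injOn f hmem hinj
  -- bound card T
  have hq0T : f q₀ ∈ T := by
    have h : onL ((q₀.1, q₀.2.2.1)) := by simp [hq₀, honL]
    simp only [hf, if_pos h, hTdef, mem_filter, mem_univ, true_and, hLdef]
    exact ⟨by simpa using h, by simpa [hq₀] using ha.symm⟩
  have hLcard : L.card ≤ 4 * n := by
    have hsub : L ⊆ (({i} ×ˢ univ) ∪ ({i'} ×ˢ univ)) ∪ ((univ ×ˢ {j}) ∪ (univ ×ˢ {j'})) := by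
      intro c hc
      simp only [hLdef, mem_filter, mem_univ, true_and, honL] at hc
      simp only [mem_union, mem_product, mem_univ, mem_singleton, true_and, and_true]
      tauto
    calc L.card ≤ _ := Finset.card_le_card hsub
      _ ≤ (({i} ×ˢ (univ : Finset (Fin n))).card + ({i'} ×ˢ (univ : Finset (Fin n))).card)
          + (((univ : Finset (Fin n)) ×ˢ {j}).card + ((univ : Finset (Fin n)) ×ˢ {j'}).card) :=
        le_trans (Finset.card_union_le _ _)
          (add_le_add (Finset.card_union_le _ _) (Finset.card_union_le _ _))
      _ ≤ 4 * n := by simp [Finset.card_product]; omega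
  have hTcard : T.card ≤ 4 * n * k := by
    have hsub : T ⊆ L.biUnion (fun c =>
        (univ.filter fun d : Fin n × Fin n => A d.1 d.2 = A c.1 c.2).image (fun d => (c, d))) := by
      intro p hp
      simp only [hTdef, mem_filter, mem_univ, true_and] at hp
      refine Finset.mem_biUnion.mpr ⟨p.1, hp.1, ?_⟩
      refine Finset.mem_image.mpr ⟨p.2, ?_, rfl⟩
      simp [hp.2]
    calc T.card ≤ _ := Finset.card_le_card hsub
      _ ≤ ∑ c ∈ L, ((univ.filter fun d : Fin n × Fin n => A d.1 d.2 = A c.1 c.2).image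
            (fun d => (c, d))).card := Finset.card_biUnion_le
      _ ≤ ∑ c ∈ L, k := by
          refine Finset.sum_le_sum fun c _ => ?_
          refine le_trans (Finset.card_image_le) ?_
          have := hA (A c.1 c.2)
          simpa [Finset.univ_product_univ] using this
      _ = L.card * k := by rw [Finset.sum_const, smul_eq_mul]
      _ ≤ 4 * n * k := Nat.mul_le_mul_right k hLcard
  have herase : (T.erase (f q₀)).card = T.card - 1 := Finset.card_erase_of_mem hq0T
  calc _ ≤ (T.erase (f q₀)).card := hcard1
    _ = T.card - 1 := herase
    _ ≤ 4 * n * k - 1 := Nat.sub_le_sub_right hTcard 1
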